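/- Let (G,γ) be a Z/3Z-colored graph and let G̃ be its development. Then (G,γ) is a cone-Laman graph if and only if G̃ is a Laman graph (a (2,3)-graph that is (2,3)-sparse). Moreover, for a cone-Laman-sparse (G,γ), a subgraph G' of G is a rigid component of (G,γ) (a maximal subgraph with m' = 2n'−1 edges) if and only if its lift π⁻¹(G') is a symmetric (2,3)-component of G̃ (a maximal (2,3)-block that is fixed setwise by the Z/3Z-action). -/

import Mathlib

/-- A finite directed multigraph: each edge has a tail and a head vertex. -/
structure Multigraph (V : Type) (E : Type) where
  tail : E → V
  head : E → V

namespace Multigraph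

variable {V E Γ : Type}

/-- The starting vertex of a step `(e, b)`: the edge `e` traversed forwards if `b = true`,
backwards otherwise. -/
def stepSrc (G : Multigraph V E) (s : E × Bool) : V :=
  if s.2 then G.tail s.1 else G.head s.1

/-- The ending vertex of a step `(e, b)`. -/
def stepDst (G : Multigraph V E) (s : E × Bool) : V :=
  if s.2 then G.head s.1 else G.tail s.1

/-- `G.WalkFrom u v w`: the list of steps `w` is a walk from `u` to `v`
(edge orientations ignored: each step records an edge and a traversal direction). -/
inductive WalkFrom (G : Multigraph V E) : V → V → List (E × Bool) → Prop
  | nil (v : V) : WalkFrom G v v []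
  | cons {v : V} (s : E × Bool) {rest : List (E × Bool)} :
      WalkFrom G (G.stepDst s) v rest → WalkFrom G (G.stepSrc s) v (s :: rest)

/-- `ρ` of a walk: the sum of the colors of forward-traversed edges minus
the sum of the colors of backward-traversed edges. -/
def rho [AddCommGroup Γ] (γ : E → Γ) (w : List (E × Bool)) : Γ :=
  (w.map fun s => if s.2 then γ s.1 else -γ s.1).sum

/-- A cycle contained in the subgraph with edge set `S`: a nonempty closed walk,
with no repeated edges and no repeated vertices. -/
def IsCycleIn (G : Multigraph V E) (S : Finset E) (w : List (E × Bool)) : Prop :=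
  (∃ v, G.WalkFrom v v w) ∧ w ≠ [] ∧ (∀ s ∈ w, s.1 ∈ S) ∧
    (w.map Prod.fst).Nodup ∧ (w.map G.stepSrc).Nodup

/-- The subgraph with edge set `S` has trivial `Γ`-image: `ρ(C) = 0` for every
cycle `C` contained in it. -/
def TrivialImage [AddCommGroup Γ] (G : Multigraph V E) (γ : E → Γ) (S : Finset E) : Prop :=
  ∀ w, G.IsCycleIn S w → rho γ w = 0

/-- The vertices spanned by an edge set. -/
def verts [DecidableEq V] (G : Multigraph V E) (S : Finset E) : Finset V :=
  S.image G.tail ∪ S.image G.head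

/-- The edge set `S` is `(k, ℓ)`-sparse: every nonempty subgraph with `n'` vertices and
`m'` edges satisfies `m' ≤ k n' - ℓ`. -/
def Sparse [DecidableEq V] (G : Multigraph V E) (k ℓ : ℤ) (S : Finset E) : Prop :=
  ∀ S' ⊆ S, S'.Nonempty → (S'.card : ℤ) ≤ k * ((G.verts S').card : ℤ) - ℓ

/-- The edge set `S` is a `(k, ℓ)`-graph (as a subgraph on its spanned vertices):
it is `(k, ℓ)`-sparse and has exactly `k n - ℓ` edges. -/
def Tight [DecidableEq V] (G : Multigraph V E) (k ℓ : ℤ) (S : Finset E) : Prop :=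
  G.Sparse k ℓ S ∧ (S.card : ℤ) = k * ((G.verts S).card : ℤ) - ℓ

/-- The edge set `S` is a `(k, ℓ)`-circuit: edge-minimal not `(k, ℓ)`-sparse. -/
def Circuit [DecidableEq V] [DecidableEq E] (G : Multigraph V E) (k ℓ : ℤ) (S : Finset E) :
    Prop :=
  ¬ G.Sparse k ℓ S ∧ ∀ e ∈ S, G.Sparse k ℓ (S.erase e)

/-- A `(k, ℓ)`-basis of `G`: a maximal `(k, ℓ)`-sparse edge set. -/
def Basis [DecidableEq V] (G : Multigraph V E) (k ℓ : ℤ) (L : Finset E) : Prop :=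
  G.Sparse k ℓ L ∧ ∀ L', L ⊆ L' → G.Sparse k ℓ L' → L' = L

/-- `C` is the fundamental `(k, ℓ)`-circuit of some edge `e ∉ L` with respect to the
`(k, ℓ)`-basis `L`: a `(k, ℓ)`-circuit contained in `L + e`. -/
def FundCircuit [DecidableEq V] [DecidableEq E] (G : Multigraph V E) (k ℓ : ℤ)
    (L C : Finset E) : Prop :=
  G.Circuit k ℓ C ∧ ∃ e, e ∉ L ∧ C ⊆ insert e L

/-- The whole graph `G` is a `(k, ℓ)`-graph: `(k, ℓ)`-sparse, with exactly
`k n - ℓ` edges where `n` is the number of vertices of `G`. -/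
def IsKLGraph [DecidableEq V] [Fintype V] [Fintype E] (G : Multigraph V E) (k ℓ : ℤ) : Prop :=
  G.Sparse k ℓ Finset.univ ∧ (Fintype.card E : ℤ) = k * (Fintype.card V : ℤ) - ℓ

/-- The colored subgraph with edge set `S` is Ross-sparse: nonempty subgraphs with trivial
`Γ`-image satisfy `m' ≤ 2n' - 3`, and those with non-trivial image satisfy `m' ≤ 2n' - 2`. -/
def RossSparseOn [DecidableEq V] [AddCommGroup Γ] (G : Multigraph V E) (γ : E → Γ)
    (S : Finset E) : Prop :=
  ∀ S' ⊆ S, S'.Nonempty →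
    (G.TrivialImage γ S' → (S'.card : ℤ) ≤ 2 * ((G.verts S').card : ℤ) - 3) ∧
    (¬ G.TrivialImage γ S' → (S'.card : ℤ) ≤ 2 * ((G.verts S').card : ℤ) - 2)

/-- The colored subgraph with edge set `S` is a Ross graph (on its spanned vertices):
Ross-sparse with exactly `2n - 2` edges. -/
def RossGraphOn [DecidableEq V] [AddCommGroup Γ] (G : Multigraph V E) (γ : E → Γ)
    (S : Finset E) : Prop :=
  G.RossSparseOn γ S ∧ (S.card : ℤ) = 2 * ((G.verts S).card : ℤ) - 2

/-- The whole colored graph `(G, γ)` is a Ross graph: Ross-sparse with exactly `2n - 2`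
edges, `n` being the number of vertices of `G`. -/
def RossGraph [DecidableEq V] [Fintype V] [Fintype E] [AddCommGroup Γ] (G : Multigraph V E)
    (γ : E → Γ) : Prop :=
  G.RossSparseOn γ Finset.univ ∧ (Fintype.card E : ℤ) = 2 * (Fintype.card V : ℤ) - 2

/-- The colored graph `(G, γ)` is cone-Laman-sparse: nonempty subgraphs with trivial image
satisfy `m' ≤ 2n' - 3`, those with non-trivial image satisfy `m' ≤ 2n' - 1`. -/
def ConeLamanSparse [DecidableEq V] [AddCommGroup Γ] (G : Multigraph V E) (γ : E → Γ) : Prop :=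
  ∀ S' : Finset E, S'.Nonempty →
    (G.TrivialImage γ S' → (S'.card : ℤ) ≤ 2 * ((G.verts S').card : ℤ) - 3) ∧
    (¬ G.TrivialImage γ S' → (S'.card : ℤ) ≤ 2 * ((G.verts S').card : ℤ) - 1)

/-- The whole colored graph `(G, γ)` is a cone-Laman graph: cone-Laman-sparse with exactly
`2n - 1` edges, `n` being the number of vertices of `G`. -/
def ConeLamanGraph [DecidableEq V] [Fintype V] [Fintype E] [AddCommGroup Γ]
    (G : Multigraph V E) (γ : E → Γ) : Prop :=
  G.ConeLamanSparse γ ∧ (Fintype.card E : ℤ) = 2 * (Fintype.card V : ℤ) - 1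

/-- A (simple) path from `u` to `v` using only edges in `S`: a walk visiting no vertex
twice. -/
def IsPathIn (G : Multigraph V E) (S : Finset E) (u v : V) (w : List (E × Bool)) : Prop :=
  G.WalkFrom u v w ∧ (∀ s ∈ w, s.1 ∈ S) ∧ (u :: w.map G.stepDst).Nodup

/-- `G` is connected. -/
def Connected (G : Multigraph V E) : Prop :=
  ∀ u v : V, ∃ w : List (E × Bool), G.WalkFrom u v w

/-- `T` is a spanning tree of `G`: every pair of vertices is joined by a path in `T`,
and `T` contains no cycle. -/
def IsSpanningTree (G : Multigraph V E) (T : Finset E) : Prop :=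
  (∀ u v : V, ∃ w, G.IsPathIn T u v w) ∧ ∀ w, ¬ G.IsCycleIn T w

/-- `T` is a spanning forest of `G`: a maximal acyclic edge set. -/
def IsSpanningForest (G : Multigraph V E) (T : Finset E) : Prop :=
  (∀ w, ¬ G.IsCycleIn T w) ∧
    ∀ T', T ⊆ T' → (∀ w, ¬ G.IsCycleIn T' w) → T' = T

/-- In the tree `T` rooted at `r`, vertex `x` lies on the (unique) path from the root `r`
to `y`; i.e. `x` is an ancestor of `y`. -/
def Anc (G : Multigraph V E) (T : Finset E) (r x y : V) : Prop :=
  ∀ w, G.IsPathIn T r y w → x ∈ (r :: w.map G.stepDst)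

/-- `a` is the least common ancestor of `i` and `j` in the tree `T` rooted at `r`:
the vertex where the paths from `i` to `r` and from `j` to `r` first converge. -/
def IsLCA (G : Multigraph V E) (T : Finset E) (r a i j : V) : Prop :=
  G.Anc T r a i ∧ G.Anc T r a j ∧ ∀ x, G.Anc T r x i → G.Anc T r x j → G.Anc T r x a

/-- The development of a `ℤ/3ℤ`-colored graph: vertices `i_z`, and for each edge `ij`
with color `γ_ij` the three edges `i_z j_{z + γ_ij}`. -/
def Development (G : Multigraph V E) (γ : E → ZMod 3) :
    Multigraph (V × ZMod 3) (E × ZMod 3) where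
  tail s := (G.tail s.1, s.2)
  head s := (G.head s.1, s.2 + γ s.1)

/-- The lift `π⁻¹(S)` in the development of the subgraph with edge set `S`. -/
def lift [DecidableEq E] (S : Finset E) : Finset (E × ZMod 3) :=
  S ×ˢ (Finset.univ : Finset (ZMod 3))

/-- The map `α_z : i_w ↦ i_{w+z}` on the vertices of the development. -/
def devShift (z : ZMod 3) : V × ZMod 3 → V × ZMod 3 :=
  fun p => (p.1, p.2 + z)

/-- The map `α_z` on the edges of the development. -/
def devShiftE (z : ZMod 3) : E × ZMod 3 → E × ZMod 3 :=
  fun s => (s.1, s.2 + z)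

/-- Two vertices of a multigraph are adjacent if some edge joins them (in either
direction). -/
def Adj (G : Multigraph V E) (u v : V) : Prop :=
  ∃ e, (G.tail e = u ∧ G.head e = v) ∨ (G.tail e = v ∧ G.head e = u)

end Multigraph

namespace Multigraph

variable {V E Γ : Type}

def flipStep (s : E × Bool) : E × Bool := (s.1, !s.2)

@[simp] lemma stepSrc_flip (G : Multigraph V E) (s : E × Bool) :
    G.stepSrc (flipStep s) = G.stepDst s := by
  cases s with
  | mk e b => cases b <;> simp [flipStep, stepSrc, stepDst]

@[simp] lemma stepDst_flip (G : Multigraph V E) (s : E × Bool) :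
    G.stepDst (flipStep s) = G.stepSrc s := by
  cases s with
  | mk e b => cases b <;> simp [flipStep, stepSrc, stepDst]

lemma WalkFrom.append {G : Multigraph V E} {u v x : V} {w₁ w₂ : List (E × Bool)}
    (h₁ : G.WalkFrom u v w₁) (h₂ : G.WalkFrom v x w₂) : G.WalkFrom u x (w₁ ++ w₂) := by
  induction h₁ with
  | nil v => simpa using h₂
  | cons s _ ih => exact WalkFrom.cons s (ih h₂)

lemma walk_split {G : Multigraph V E} {u v : V} {w₁ w₂ : List (E × Bool)}
    (h : G.WalkFrom u v (w₁ ++ w₂)) : ∃ x, G.WalkFrom u x w₁ ∧ G.WalkFrom x v w₂ := by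
  induction w₁ generalizing u with
  | nil => exact ⟨u, WalkFrom.nil u, by simpa using h⟩
  | cons s t ih =>
    cases h with
    | cons s hrest =>
      obtain ⟨x, hx1, hx2⟩ := ih hrest
      exact ⟨x, WalkFrom.cons s hx1, hx2⟩

lemma walk_cons_src {G : Multigraph V E} {u v : V} {s : E × Bool} {w : List (E × Bool)}
    (h : G.WalkFrom u v (s :: w)) : u = G.stepSrc s ∧ G.WalkFrom (G.stepDst s) v w := by
  cases h with
  | cons s hrest => exact ⟨rfl, hrest⟩

lemma WalkFrom.single (G : Multigraph V E) (s : E × Bool) :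
    G.WalkFrom (G.stepSrc s) (G.stepDst s) [s] :=
  WalkFrom.cons s (WalkFrom.nil _)

lemma WalkFrom.reverse {G : Multigraph V E} {u v : V} {w : List (E × Bool)}
    (h : G.WalkFrom u v w) : G.WalkFrom v u (w.reverse.map flipStep) := by
  induction h with
  | nil v => exact WalkFrom.nil v
  | cons s hrest ih =>
    have hs : G.WalkFrom (G.stepDst s) (G.stepSrc s) [flipStep s] := by
      have := WalkFrom.single G (flipStep s)
      simpa using this
    simpa using ih.append hs

@[simp] lemma rho_nil [AddCommGroup Γ] (γ : E → Γ) : rho γ ([] : List (E × Bool)) = 0 := rfl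

@[simp] lemma rho_cons [AddCommGroup Γ] (γ : E → Γ) (s : E × Bool) (w : List (E × Bool)) :
    rho γ (s :: w) = (if s.2 then γ s.1 else -γ s.1) + rho γ w := by
  simp [rho]

@[simp] lemma rho_append [AddCommGroup Γ] (γ : E → Γ) (w₁ w₂ : List (E × Bool)) :
    rho γ (w₁ ++ w₂) = rho γ w₁ + rho γ w₂ := by
  simp [rho]

lemma rho_reverse_flip [AddCommGroup Γ] (γ : E → Γ) (w : List (E × Bool)) :
    rho γ (w.reverse.map flipStep) = - rho γ w := by
  induction w with
  | nil => simp
  | cons s t ih =>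
    simp only [List.reverse_cons, List.map_append, rho_append, ih, List.map_cons,
      List.map_nil, rho_cons, rho_nil]
    cases s with
    | mk e b => cases b <;> simp [flipStep] <;> abel

lemma rho_eq_of_potential [AddCommGroup Γ] {G : Multigraph V E} {γ : E → Γ} {S : Finset E}
    {φ : V → Γ} (hφ : ∀ e ∈ S, φ (G.head e) = φ (G.tail e) + γ e)
    {u v : V} {w : List (E × Bool)} (hw : G.WalkFrom u v w) (hS : ∀ s ∈ w, s.1 ∈ S) :
    rho γ w = φ v - φ u := by
  induction hw with
  | nil v => simp
  | cons s hrest ih =>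
    have hsS : s.1 ∈ S := hS s (by simp)
    have ih' := ih (fun t ht => hS t (by simp [ht]))
    rw [rho_cons, ih']
    cases s with
    | mk e b =>
      have he := hφ e hsS
      cases b <;> simp only [stepSrc, stepDst, if_true, if_false, Bool.false_eq_true,
        ite_true, ite_false] <;> rw [he] <;> abel

lemma trivialImage_of_potential [AddCommGroup Γ] {G : Multigraph V E} {γ : E → Γ}
    {S : Finset E} {φ : V → Γ} (hφ : ∀ e ∈ S, φ (G.head e) = φ (G.tail e) + γ e) :
    G.TrivialImage γ S := by
  rintro w ⟨⟨v, hw⟩, -, hS, -, -⟩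
  rw [rho_eq_of_potential hφ hw hS]
  simp

end Multigraph
namespace Multigraph

variable {V E Γ : Type}

lemma exists_dup_split {α β : Type*} [DecidableEq β] (f : α → β) :
    ∀ {l : List α}, ¬ (l.map f).Nodup →
      ∃ a s₁ b s₂ c, l = a ++ s₁ :: (b ++ s₂ :: c) ∧ f s₁ = f s₂ := by
  intro l
  induction l with
  | nil => intro h; exact absurd List.nodup_nil h
  | cons x t ih =>
    intro h
    by_cases hx : f x ∈ t.map f
    · obtain ⟨s₂, hs₂t, hfs₂⟩ := List.mem_map.mp hx
      obtain ⟨b, c, rfl⟩ := List.append_of_mem hs₂t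
      exact ⟨[], x, b, s₂, c, by simp, hfs₂.symm⟩
    · have ht : ¬ (t.map f).Nodup := by
        intro hn
        exact h (by simp [List.nodup_cons, hx, hn])
      obtain ⟨a, s₁, b, s₂, c, rfl, hfs⟩ := ih ht
      exact ⟨x :: a, s₁, b, s₂, c, by simp, hfs⟩

lemma rho_closed_eq_zero_aux [AddCommGroup Γ] [DecidableEq V] [DecidableEq E]
    {G : Multigraph V E} {γ : E → Γ} {S : Finset E} (hT : G.TrivialImage γ S) :
    ∀ n (w : List (E × Bool)), w.length ≤ n → ∀ v, G.WalkFrom v v w →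
      (∀ s ∈ w, s.1 ∈ S) → rho γ w = 0 := by
  intro n
  induction n with
  | zero =>
    intro w hlen v _ _
    have : w = [] := List.eq_nil_of_length_eq_zero (Nat.le_zero.mp hlen)
    simp [this]
  | succ n ih =>
    intro w hlen v hw hS
    rcases List.eq_nil_or_concat w with rfl | _
    · simp
    by_cases hsrc : (w.map G.stepSrc).Nodup
    · by_cases hedge : (w.map Prod.fst).Nodup
      · -- it's a cycle (or empty)
        rcases w with _ | ⟨s, t⟩
        · simp
        · exact hT _ ⟨⟨v, hw⟩, by simp, hS, hedge, hsrc⟩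
      · -- repeated edge, sources distinct
        obtain ⟨a, s₁, b, s₂, c, rfl, hfs⟩ := exists_dup_split Prod.fst hedge
        -- decompose the walk
        obtain ⟨x, hwa, hwrest⟩ := walk_split hw
        obtain ⟨hx, hwtail⟩ := walk_cons_src hwrest
        obtain ⟨y, hwb, hwrest2⟩ := walk_split hwtail
        obtain ⟨hy, hwc⟩ := walk_cons_src hwrest2
        -- sources of s₁ and s₂ are distinct
        have hsrcne : G.stepSrc s₁ ≠ G.stepSrc s₂ := by
          have h1 : ((a ++ s₁ :: (b ++ s₂ :: c)).map G.stepSrc) =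
              a.map G.stepSrc ++ G.stepSrc s₁ :: ((b ++ s₂ :: c).map G.stepSrc) := by
            simp
          rw [h1] at hsrc
          have h2 := (List.nodup_append.mp hsrc).2.1
          have h3 : G.stepSrc s₁ ∉ (b ++ s₂ :: c).map G.stepSrc :=
            (List.nodup_cons.mp h2).1
          intro hEq
          exact h3 (by rw [hEq]; exact List.mem_map_of_mem (by simp))
        -- s₂ is the flip of s₁
        have hbne : s₁.2 ≠ s₂.2 := by
          intro hb
          apply hsrcne
          have : s₁ = s₂ := Prod.ext hfs hb
          rw [this]
        have hs₂ : s₂ = flipStep s₁ := by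
          cases s₁ with
          | mk e b1 =>
            cases s₂ with
            | mk e' b2 =>
              simp only at hfs
              subst hfs
              cases b1 <;> cases b2 <;> simp_all [flipStep]
        -- b is a closed walk at stepDst s₁
        have hyx : y = G.stepDst s₁ := by
          rw [hy, hs₂, stepSrc_flip]
        have hb_closed : G.WalkFrom (G.stepDst s₁) (G.stepDst s₁) b := by
          rw [← hyx] at hwb ⊢
          -- hwb : WalkFrom (stepDst s₁) y b, need y = stepDst s₁ ... we rewrote
          exact hwb
        have hrb : rho γ b = 0 := by
          apply ih b (by simp at hlen ⊢; omega) _ hb_closed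
          intro s hs; exact hS s (by simp [hs])
        -- a ++ c is a closed walk at v
        have hwc' : G.WalkFrom x v c := by
          have : G.stepDst s₂ = G.stepSrc s₁ := by rw [hs₂, stepDst_flip]
          rw [this, ← hx] at hwc
          exact hwc
        have hac : G.WalkFrom v v (a ++ c) := hwa.append hwc'
        have hrac : rho γ (a ++ c) = 0 := by
          apply ih (a ++ c) (by simp at hlen ⊢; omega) v hac
          intro s hs
          rcases List.mem_append.mp hs with h | h
          · exact hS s (by simp [h])
          · exact hS s (by simp [h])
        have hcancel : (if s₁.2 then γ s₁.1 else -γ s₁.1) +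
            (if s₂.2 then γ s₂.1 else -γ s₂.1) = 0 := by
          rw [hs₂]
          cases s₁ with
          | mk e b1 => cases b1 <;> simp [flipStep]
        simp only [rho_append, rho_cons] at hrac ⊢
        have hre : rho γ a + ((if s₁.2 then γ s₁.1 else -γ s₁.1) +
            (rho γ b + ((if s₂.2 then γ s₂.1 else -γ s₂.1) + rho γ c))) =
            (rho γ a + rho γ c) + ((if s₁.2 then γ s₁.1 else -γ s₁.1) +
              (if s₂.2 then γ s₂.1 else -γ s₂.1)) + rho γ b := by abel
        rw [hre, hrac, hcancel]
        simp [hrb]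
    · -- repeated vertex
      obtain ⟨a, s₁, b, s₂, c, rfl, hfs⟩ := exists_dup_split G.stepSrc hsrc
      obtain ⟨x, hwa, hwrest⟩ := walk_split hw
      obtain ⟨hx, hwtail⟩ := walk_cons_src hwrest
      obtain ⟨y, hwb, hwrest2⟩ := walk_split hwtail
      obtain ⟨hy, hwc⟩ := walk_cons_src hwrest2
      -- middle s₁ :: b is closed at stepSrc s₁
      have hmid : G.WalkFrom (G.stepSrc s₁) (G.stepSrc s₁) (s₁ :: b) := by
        apply WalkFrom.cons
        rw [← hfs] at hy
        rw [← hy]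
        exact hwb
      have hrmid : rho γ (s₁ :: b) = 0 := by
        apply ih (s₁ :: b) (by simp at hlen ⊢; omega) _ hmid
        intro s hs
        rcases List.mem_cons.mp hs with rfl | h
        · exact hS s (by simp)
        · exact hS s (by simp [h])
      -- outer a ++ s₂ :: c is closed at v
      have hwsc : G.WalkFrom x v (s₂ :: c) := by
        rw [hx, hfs]
        exact WalkFrom.cons s₂ hwc
      have houter : G.WalkFrom v v (a ++ s₂ :: c) := hwa.append hwsc
      have hrout : rho γ (a ++ s₂ :: c) = 0 := by
        apply ih (a ++ s₂ :: c) (by simp at hlen ⊢; omega) v houter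
        intro s hs
        rcases List.mem_append.mp hs with h | h
        · exact hS s (by simp [h])
        · exact hS s (by simp [h])
      simp only [rho_append, rho_cons] at hrmid hrout ⊢
      have hre : rho γ a + ((if s₁.2 then γ s₁.1 else -γ s₁.1) +
          (rho γ b + ((if s₂.2 then γ s₂.1 else -γ s₂.1) + rho γ c))) =
          ((if s₁.2 then γ s₁.1 else -γ s₁.1) + rho γ b) +
            (rho γ a + ((if s₂.2 then γ s₂.1 else -γ s₂.1) + rho γ c)) := by abel
      rw [hre, hrmid]
      simp [hrout]

lemma rho_closed_eq_zero [AddCommGroup Γ] [DecidableEq V] [DecidableEq E]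
    {G : Multigraph V E} {γ : E → Γ} {S : Finset E} (hT : G.TrivialImage γ S)
    {v : V} {w : List (E × Bool)} (hw : G.WalkFrom v v w) (hS : ∀ s ∈ w, s.1 ∈ S) :
    rho γ w = 0 :=
  rho_closed_eq_zero_aux hT w.length w le_rfl v hw hS

end Multigraph
namespace Multigraph

variable {V E Γ : Type}

/-- Reachability within an edge set. -/
def Reach (G : Multigraph V E) (S : Finset E) (u v : V) : Prop :=
  ∃ w, G.WalkFrom u v w ∧ ∀ s ∈ w, s.1 ∈ S

lemma Reach.refl (G : Multigraph V E) (S : Finset E) (v : V) : G.Reach S v v :=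
  ⟨[], WalkFrom.nil v, by simp⟩

lemma Reach.symm {G : Multigraph V E} {S : Finset E} {u v : V}
    (h : G.Reach S u v) : G.Reach S v u := by
  obtain ⟨w, hw, hS⟩ := h
  refine ⟨w.reverse.map flipStep, hw.reverse, ?_⟩
  intro s hs
  simp only [List.mem_map, List.mem_reverse] at hs
  obtain ⟨t, ht, rfl⟩ := hs
  simpa [flipStep] using hS t ht

lemma Reach.trans {G : Multigraph V E} {S : Finset E} {u v x : V}
    (h₁ : G.Reach S u v) (h₂ : G.Reach S v x) : G.Reach S u x := by
  obtain ⟨w₁, hw₁, hS₁⟩ := h₁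
  obtain ⟨w₂, hw₂, hS₂⟩ := h₂
  refine ⟨w₁ ++ w₂, hw₁.append hw₂, ?_⟩
  intro s hs
  rcases List.mem_append.mp hs with h | h
  · exact hS₁ s h
  · exact hS₂ s h

def reachSetoid (G : Multigraph V E) (S : Finset E) : Setoid V :=
  ⟨G.Reach S, ⟨Reach.refl G S, Reach.symm, fun h₁ h₂ => h₁.trans h₂⟩⟩

lemma exists_potential [AddCommGroup Γ] [DecidableEq V] [DecidableEq E]
    {G : Multigraph V E} {γ : E → Γ} {S : Finset E} (hT : G.TrivialImage γ S) :
    ∃ φ : V → Γ, ∀ e ∈ S, φ (G.head e) = φ (G.tail e) + γ e := by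
  classical
  set st := G.reachSetoid S with hst
  have hreach : ∀ v : V, G.Reach S (Quotient.mk st v).out v := fun v =>
    Quotient.exact (Quotient.out_eq (Quotient.mk st v))
  choose wfun hwfun hSfun using fun v => hreach v
  refine ⟨fun v => rho γ (wfun v), ?_⟩
  intro e he
  have hadj : G.Reach S (G.tail e) (G.head e) := by
    refine ⟨[(e, true)], ?_, by simpa using he⟩
    have := WalkFrom.single G (e, true)
    simpa [stepSrc, stepDst] using this
  have hrep : (Quotient.mk st (G.tail e)).out = (Quotient.mk st (G.head e)).out := by
    congr 1
    exact Quotient.sound hadj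
  set r := (Quotient.mk st (G.tail e)).out with hr
  -- closed walk at r : w_tail ++ [(e,true)] ++ reverse (w_head)
  have hwt : G.WalkFrom r (G.tail e) (wfun (G.tail e)) := hwfun _
  have hwh : G.WalkFrom r (G.head e) (wfun (G.head e)) := by
    rw [hrep]; exact hwfun _
  have hstep : G.WalkFrom (G.tail e) (G.head e) [(e, true)] := by
    have := WalkFrom.single G (e, true)
    simpa [stepSrc, stepDst] using this
  have hclosed : G.WalkFrom r r
      ((wfun (G.tail e) ++ [(e, true)]) ++ (wfun (G.head e)).reverse.map flipStep) :=
    (hwt.append hstep).append hwh.reverse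
  have hSall : ∀ s ∈ (wfun (G.tail e) ++ [(e, true)]) ++
      (wfun (G.head e)).reverse.map flipStep, s.1 ∈ S := by
    intro s hs
    rcases List.mem_append.mp hs with h | h
    · rcases List.mem_append.mp h with h' | h'
      · exact hSfun _ s h'
      · simp only [List.mem_singleton] at h'
        subst h'
        exact he
    · simp only [List.mem_map, List.mem_reverse] at h
      obtain ⟨t, ht, rfl⟩ := h
      simpa [flipStep] using hSfun _ t ht
  have h0 := rho_closed_eq_zero hT hclosed hSall
  simp only [rho_append, rho_reverse_flip, rho_cons, rho_nil] at h0
  have h1 : rho γ (wfun (G.tail e)) + γ e + -rho γ (wfun (G.head e)) = 0 := by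
    simpa using h0
  have hgoal : rho γ (wfun (G.head e)) = rho γ (wfun (G.tail e)) + γ e := by
    have := congrArg (fun x => x + rho γ (wfun (G.head e))) h1
    simpa [add_assoc] using this.symm
  exact hgoal

end Multigraph
namespace Multigraph

open Finset

variable {V E : Type}

/-- The fiber of a finset of a product over a base point. -/
def fib {X : Type} [DecidableEq X] (A : Finset (X × ZMod 3)) (x : X) : Finset (ZMod 3) :=
  Finset.univ.filter (fun z => (x, z) ∈ A)

lemma card_univ_zmod3 : (Finset.univ : Finset (ZMod 3)).card = 3 := by decide

lemma fib_card_le_three {X : Type} [DecidableEq X] (A : Finset (X × ZMod 3)) (x : X) :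
    (fib A x).card ≤ 3 := by
  calc (fib A x).card ≤ (Finset.univ : Finset (ZMod 3)).card :=
        Finset.card_le_card (Finset.filter_subset _ _)
    _ = 3 := card_univ_zmod3

lemma mem_fib {X : Type} [DecidableEq X] {A : Finset (X × ZMod 3)} {x : X} {z : ZMod 3} :
    z ∈ fib A x ↔ (x, z) ∈ A := by simp [fib]

lemma filter_fst_card {X : Type} [DecidableEq X] (A : Finset (X × ZMod 3)) (x : X) :
    (A.filter (fun s => s.1 = x)).card = (fib A x).card := by
  apply Finset.card_bij (fun s _ => s.2)
  · rintro ⟨x', z⟩ hs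
    simp only [Finset.mem_filter] at hs
    obtain ⟨hA, rfl⟩ := hs
    simpa [mem_fib] using hA
  · rintro ⟨x1, z1⟩ h1 ⟨x2, z2⟩ h2 hz
    simp only [Finset.mem_filter] at h1 h2
    obtain ⟨-, rfl⟩ := h1
    obtain ⟨-, rfl⟩ := h2
    simp only at hz
    rw [hz]
  · intro z hz
    exact ⟨(x, z), Finset.mem_filter.mpr ⟨mem_fib.mp hz, rfl⟩, rfl⟩

lemma card_eq_sum_fib {X : Type} [DecidableEq X] (A : Finset (X × ZMod 3)) :
    A.card = ∑ x ∈ A.image Prod.fst, (fib A x).card := by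
  rw [Finset.card_eq_sum_card_fiberwise (f := Prod.fst) (t := A.image Prod.fst)
    (fun s hs => Finset.mem_image_of_mem _ hs)]
  exact Finset.sum_congr rfl fun x _ => filter_fst_card A x

lemma fib_nonempty_of_mem_image {X : Type} [DecidableEq X] {A : Finset (X × ZMod 3)} {x : X}
    (hx : x ∈ A.image Prod.fst) : 1 ≤ (fib A x).card := by
  obtain ⟨⟨x', z⟩, hs, rfl⟩ := Finset.mem_image.mp hx
  exact Finset.card_pos.mpr ⟨z, mem_fib.mpr hs⟩

section Dev

variable [DecidableEq V] [DecidableEq E] (G : Multigraph V E) (γ : E → ZMod 3)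

lemma mem_verts_dev {S' : Finset (E × ZMod 3)} {p : V × ZMod 3} :
    p ∈ (G.Development γ).verts S' ↔
      (∃ s ∈ S', (G.tail s.1, s.2) = p) ∨ (∃ s ∈ S', (G.head s.1, s.2 + γ s.1) = p) := by
  simp [verts, Development, Finset.mem_union, Finset.mem_image]

lemma tail_mem_verts_dev {S' : Finset (E × ZMod 3)} {e : E} {z : ZMod 3}
    (h : (e, z) ∈ S') : ((G.tail e, z) : V × ZMod 3) ∈ (G.Development γ).verts S' :=
  (mem_verts_dev G γ).mpr (Or.inl ⟨(e, z), h, rfl⟩)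

lemma head_mem_verts_dev {S' : Finset (E × ZMod 3)} {e : E} {z : ZMod 3}
    (h : (e, z) ∈ S') : ((G.head e, z + γ e) : V × ZMod 3) ∈ (G.Development γ).verts S' :=
  (mem_verts_dev G γ).mpr (Or.inr ⟨(e, z), h, rfl⟩)

lemma efib_le_tail {S' : Finset (E × ZMod 3)} (e : E) :
    (fib S' e).card ≤ (fib ((G.Development γ).verts S') (G.tail e)).card := by
  apply Finset.card_le_card
  intro z hz
  exact mem_fib.mpr (tail_mem_verts_dev G γ (mem_fib.mp hz))

lemma efib_le_head {S' : Finset (E × ZMod 3)} (e : E) :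
    (fib S' e).card ≤ (fib ((G.Development γ).verts S') (G.head e)).card := by
  have himg : (fib S' e).image (· + γ e) ⊆ fib ((G.Development γ).verts S') (G.head e) := by
    intro z hz
    obtain ⟨w, hw, rfl⟩ := Finset.mem_image.mp hz
    exact mem_fib.mpr (head_mem_verts_dev G γ (mem_fib.mp hw))
  calc (fib S' e).card = ((fib S' e).image (· + γ e)).card :=
        (Finset.card_image_of_injective _ (add_left_injective (γ e))).symm
    _ ≤ _ := Finset.card_le_card himg

lemma image_fst_verts_dev (S' : Finset (E × ZMod 3)) :
    ((G.Development γ).verts S').image Prod.fst = G.verts (S'.image Prod.fst) := by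
  simp only [verts, Finset.image_union, Finset.image_image]
  rfl

lemma tail_mem_verts {S : Finset E} {e : E} (he : e ∈ S) : G.tail e ∈ G.verts S :=
  Finset.mem_union.mpr (Or.inl (Finset.mem_image_of_mem _ he))

lemma head_mem_verts {S : Finset E} {e : E} (he : e ∈ S) : G.head e ∈ G.verts S :=
  Finset.mem_union.mpr (Or.inr (Finset.mem_image_of_mem _ he))

lemma verts_mono {S T : Finset E} (h : S ⊆ T) : G.verts S ⊆ G.verts T :=
  Finset.union_subset_union (Finset.image_subset_image h) (Finset.image_subset_image h)

lemma mem_verts_iff {S : Finset E} {v : V} :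
    v ∈ G.verts S ↔ ∃ e ∈ S, G.tail e = v ∨ G.head e = v := by
  simp only [verts, Finset.mem_union, Finset.mem_image]
  constructor
  · rintro (⟨e, he, rfl⟩ | ⟨e, he, rfl⟩)
    · exact ⟨e, he, Or.inl rfl⟩
    · exact ⟨e, he, Or.inr rfl⟩
  · rintro ⟨e, he, rfl | rfl⟩
    · exact Or.inl ⟨e, he, rfl⟩
    · exact Or.inr ⟨e, he, rfl⟩

end Dev

end Multigraph
namespace Multigraph

open Finset

variable {V E : Type} [DecidableEq V] [DecidableEq E] [Fintype E]

lemma dev_sparse_of_coneLamanSparse (G : Multigraph V E) (γ : E → ZMod 3)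
    (h : G.ConeLamanSparse γ) : (G.Development γ).Sparse 2 3 Finset.univ := by
  classical
  intro S' _ hne
  set Vt := (G.Development γ).verts S' with hVt
  set S₁ := S'.image Prod.fst with hS₁
  set V₁ := Vt.image Prod.fst with hV₁
  set a : E → ℕ := fun e => (fib S' e).card with ha
  set b : V → ℕ := fun v => (fib Vt v).card with hb
  set S₂ := S₁.filter (fun e => 2 ≤ a e) with hS₂
  set S₃ := S₁.filter (fun e => 3 ≤ a e) with hS₃
  set V₂ := V₁.filter (fun v => 2 ≤ b v) with hV₂
  set V₃ := V₁.filter (fun v => 3 ≤ b v) with hV₃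
  have hV1 : V₁ = G.verts S₁ := image_fst_verts_dev G γ S'
  -- basic bounds
  have haS : ∀ e ∈ S₁, 1 ≤ a e ∧ a e ≤ 3 := fun e he =>
    ⟨fib_nonempty_of_mem_image he, fib_card_le_three _ _⟩
  have hbV : ∀ v ∈ V₁, 1 ≤ b v ∧ b v ≤ 3 := fun v hv =>
    ⟨fib_nonempty_of_mem_image hv, fib_card_le_three _ _⟩
  have hatail : ∀ e, a e ≤ b (G.tail e) := fun e => efib_le_tail G γ e
  have hahead : ∀ e, a e ≤ b (G.head e) := fun e => efib_le_head G γ e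
  have htailV₁ : ∀ e ∈ S₁, G.tail e ∈ V₁ := fun e he => hV1 ▸ tail_mem_verts G he
  have hheadV₁ : ∀ e ∈ S₁, G.head e ∈ V₁ := fun e he => hV1 ▸ head_mem_verts G he
  -- cardinality decompositions
  have hmS : S'.card = S₁.card + S₂.card + S₃.card := by
    rw [card_eq_sum_fib S', ← hS₁]
    have : ∀ e ∈ S₁, a e = 1 + (if 2 ≤ a e then 1 else 0) + (if 3 ≤ a e then 1 else 0) := by
      intro e he
      have := haS e he
      rcases this with ⟨h1, h3⟩
      interval_cases (a e) <;> simp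
    rw [Finset.sum_congr rfl this]
    rw [Finset.sum_add_distrib, Finset.sum_add_distrib, Finset.sum_const, smul_eq_mul,
      mul_one]
    rw [Finset.sum_boole, Finset.sum_boole]
    simp [hS₂, hS₃]
  have hnV : Vt.card = V₁.card + V₂.card + V₃.card := by
    rw [card_eq_sum_fib Vt, ← hV₁]
    have : ∀ v ∈ V₁, b v = 1 + (if 2 ≤ b v then 1 else 0) + (if 3 ≤ b v then 1 else 0) := by
      intro v hv
      rcases hbV v hv with ⟨h1, h3⟩
      interval_cases (b v) <;> simp
    rw [Finset.sum_congr rfl this]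
    rw [Finset.sum_add_distrib, Finset.sum_add_distrib, Finset.sum_const, smul_eq_mul,
      mul_one]
    rw [Finset.sum_boole, Finset.sum_boole]
    simp [hV₂, hV₃]
  have hS₁ne : S₁.Nonempty := hne.image _
  -- verts inclusions
  have hvS₂ : G.verts S₂ ⊆ V₂ := by
    intro v hv
    obtain ⟨e, he, hor⟩ := (mem_verts_iff G).mp hv
    have heS₁ : e ∈ S₁ := Finset.mem_of_mem_filter e he
    have hae : 2 ≤ a e := (Finset.mem_filter.mp he).2
    rcases hor with rfl | rfl
    · exact Finset.mem_filter.mpr ⟨htailV₁ e heS₁, le_trans hae (hatail e)⟩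
    · exact Finset.mem_filter.mpr ⟨hheadV₁ e heS₁, le_trans hae (hahead e)⟩
  have hvS₃ : G.verts S₃ ⊆ V₃ := by
    intro v hv
    obtain ⟨e, he, hor⟩ := (mem_verts_iff G).mp hv
    have heS₁ : e ∈ S₁ := Finset.mem_of_mem_filter e he
    have hae : 3 ≤ a e := (Finset.mem_filter.mp he).2
    rcases hor with rfl | rfl
    · exact Finset.mem_filter.mpr ⟨htailV₁ e heS₁, le_trans hae (hatail e)⟩
    · exact Finset.mem_filter.mpr ⟨hheadV₁ e heS₁, le_trans hae (hahead e)⟩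
  -- generic cone-sparsity bound (either case)
  have hcone : ∀ S : Finset E, S.Nonempty → (S.card : ℤ) ≤ 2 * ((G.verts S).card : ℤ) - 1 := by
    intro S hSne
    rcases h S hSne with ⟨ht, hnt⟩
    by_cases htr : G.TrivialImage γ S
    · linarith [ht htr]
    · exact hnt htr
  -- goal in ℤ
  by_cases hV2 : V₂ = ∅
  · -- all vertex fibers singletons: trivial image case
    have hb1 : ∀ v ∈ V₁, b v ≤ 1 := by
      intro v hv
      by_contra hgt
      have : v ∈ V₂ := Finset.mem_filter.mpr ⟨hv, by omega⟩
      simp [hV2] at this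
    have hS2e : S₂ = ∅ := by
      rw [hS₂, Finset.filter_eq_empty_iff]
      intro e he
      have := le_trans (hatail e) (hb1 _ (htailV₁ e he))
      omega
    have hS3e : S₃ = ∅ := by
      rw [hS₃, Finset.filter_eq_empty_iff]
      intro e he
      have := le_trans (hatail e) (hb1 _ (htailV₁ e he))
      omega
    have hV3e : V₃ = ∅ := by
      rw [hV₃, Finset.filter_eq_empty_iff]
      intro v hv
      have := hb1 v hv
      omega
    -- potential
    have huniq : ∀ v ∈ V₁, ∀ z z' : ZMod 3, (v, z) ∈ Vt → (v, z') ∈ Vt → z = z' := by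
      intro v hv z z' hz hz'
      have hcard := hb1 v hv
      have := Finset.card_le_one.mp hcard z (mem_fib.mpr hz) z' (mem_fib.mpr hz')
      exact this
    set φ : V → ZMod 3 := fun v => if hh : ∃ z, (v, z) ∈ Vt then hh.choose else 0 with hφ
    have hφspec : ∀ v z, (v, z) ∈ Vt → v ∈ V₁ → φ v = z := by
      intro v z hz hv
      have hex : ∃ z, (v, z) ∈ Vt := ⟨z, hz⟩
      rw [hφ]
      simp only [dif_pos hex]
      exact huniq v hv _ _ hex.choose_spec hz
    have hpot : ∀ e ∈ S₁, φ (G.head e) = φ (G.tail e) + γ e := by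
      intro e he
      obtain ⟨s, hs, rfl⟩ := Finset.mem_image.mp he
      have h1 : ((G.tail s.1, s.2) : V × ZMod 3) ∈ Vt := tail_mem_verts_dev G γ hs
      have h2 : ((G.head s.1, s.2 + γ s.1) : V × ZMod 3) ∈ Vt := head_mem_verts_dev G γ hs
      rw [hφspec _ _ h1 (htailV₁ _ he), hφspec _ _ h2 (hheadV₁ _ he)]
    have htriv : G.TrivialImage γ S₁ := trivialImage_of_potential hpot
    have hbound := (h S₁ hS₁ne).1 htriv
    rw [← hV1] at hbound
    have hS2c : S₂.card = 0 := by simp [hS2e]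
    have hS3c : S₃.card = 0 := by simp [hS3e]
    have hV3c : V₃.card = 0 := by simp [hV3e]
    have hV2c : V₂.card = 0 := by simp [hV2]
    omega
  · have hV2ne : V₂.Nonempty := Finset.nonempty_of_ne_empty hV2
    have hV2card : 1 ≤ V₂.card := Finset.card_pos.mpr hV2ne
    have h1 : (S₁.card : ℤ) ≤ 2 * (V₁.card : ℤ) - 1 := by
      have := hcone S₁ hS₁ne
      rw [← hV1] at this
      exact this
    by_cases hS2 : S₂ = ∅
    · have hS3e : S₃ = ∅ := by
        rw [hS₃, Finset.filter_eq_empty_iff]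
        intro e he
        by_contra hge
        have : e ∈ S₂ := Finset.mem_filter.mpr ⟨he, by omega⟩
        simp [hS2] at this
      have hV3sub : V₃ ⊆ V₂ := by
        intro v hv
        rcases Finset.mem_filter.mp hv with ⟨hv1, hv3⟩
        exact Finset.mem_filter.mpr ⟨hv1, by omega⟩
      have := Finset.card_le_card hV3sub
      have hm : S'.card = S₁.card := by
        have : S₂.card = 0 := by simp [hS2]
        have h3 : S₃.card = 0 := by simp [hS3e]
        omega
      omega
    · have hS2ne : S₂.Nonempty := Finset.nonempty_of_ne_empty hS2
      by_cases hV3 : V₃ = ∅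
      · -- all fibers ≤ 2, potential on S₂ from missing values
        have hb2 : ∀ v ∈ V₁, b v ≤ 2 := by
          intro v hv
          by_contra hgt
          have : v ∈ V₃ := Finset.mem_filter.mpr ⟨hv, by omega⟩
          simp [hV3] at this
        have hS3e : S₃ = ∅ := by
          rw [hS₃, Finset.filter_eq_empty_iff]
          intro e he
          have := le_trans (hatail e) (hb2 _ (htailV₁ e he))
          omega
        -- the missing fiber value
        have hmiss : ∀ v ∈ V₁, b v = 2 → ∃ z, (v, z) ∉ Vt := by
          intro v hv h2
          have hsplit := Finset.card_filter_add_card_filter_not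
            (s := (Finset.univ : Finset (ZMod 3))) (p := fun z => (v, z) ∈ Vt)
          have hfib : (Finset.univ.filter (fun z => (v, z) ∈ Vt)).card = 2 := h2
          rw [card_univ_zmod3, hfib] at hsplit
          have hpos : 0 < (Finset.univ.filter (fun z => ¬ (v, z) ∈ Vt)).card := by omega
          obtain ⟨z, hz⟩ := Finset.card_pos.mp hpos
          exact ⟨z, (Finset.mem_filter.mp hz).2⟩
        set μ : V → ZMod 3 := fun v => if hh : ∃ z, (v, z) ∉ Vt then hh.choose else 0 with hμ
        have hμspec : ∀ v, (∃ z, (v, z) ∉ Vt) → (v, μ v) ∉ Vt := by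
          intro v hex
          rw [hμ]
          simp only [dif_pos hex]
          exact hex.choose_spec
        have hμuniq : ∀ v ∈ V₁, b v = 2 → ∀ z, (v, z) ∉ Vt → z = μ v := by
          intro v hv h2 z hz
          have hcompl : (Finset.univ.filter (fun z => (v, z) ∉ Vt)).card = 1 := by
            have := Finset.card_filter_add_card_filter_not
              (s := (Finset.univ : Finset (ZMod 3))) (p := fun z => (v, z) ∈ Vt)
            have hfib : (Finset.univ.filter (fun z => (v, z) ∈ Vt)).card = 2 := h2
            rw [card_univ_zmod3] at this
            omega
          have hzmem : z ∈ Finset.univ.filter (fun z => (v, z) ∉ Vt) := by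
            simp [hz]
          have hμmem : μ v ∈ Finset.univ.filter (fun z => (v, z) ∉ Vt) := by
            simp [hμspec v ⟨z, hz⟩]
          exact Finset.card_le_one.mp (le_of_eq hcompl) z hzmem _ hμmem
        have hpot : ∀ e ∈ S₂, μ (G.head e) = μ (G.tail e) + γ e := by
          intro e he
          have heS₁ : e ∈ S₁ := Finset.mem_of_mem_filter e he
          have hae2 : 2 ≤ a e := (Finset.mem_filter.mp he).2
          have htv : G.tail e ∈ V₁ := htailV₁ e heS₁
          have hhv : G.head e ∈ V₁ := hheadV₁ e heS₁
          have hbt : b (G.tail e) = 2 :=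
            le_antisymm (hb2 _ htv) (le_trans hae2 (hatail e))
          have hbh : b (G.head e) = 2 :=
            le_antisymm (hb2 _ hhv) (le_trans hae2 (hahead e))
          by_contra hnePot
          -- then the two excluded values are distinct and the edge fiber has ≤ 1 element
          have hx : μ (G.tail e) ≠ μ (G.head e) - γ e := by
            intro hEq
            apply hnePot
            rw [hEq]
            ring
          have hsub : fib S' e ⊆ Finset.univ \ {μ (G.tail e), μ (G.head e) - γ e} := by
            intro z hz
            have hzS : (e, z) ∈ S' := mem_fib.mp hz
            have ht' : ((G.tail e, z) : V × ZMod 3) ∈ Vt := tail_mem_verts_dev G γ hzS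
            have hh' : ((G.head e, z + γ e) : V × ZMod 3) ∈ Vt := head_mem_verts_dev G γ hzS
            rw [Finset.mem_sdiff]
            refine ⟨Finset.mem_univ _, ?_⟩
            simp only [Finset.mem_insert, Finset.mem_singleton]
            push_neg
            constructor
            · intro hEq
              exact hμspec (G.tail e) (hmiss _ htv hbt) (hEq ▸ ht')
            · intro hEq
              apply hμspec (G.head e) (hmiss _ hhv hbh)
              have hzz : z + γ e = μ (G.head e) := by rw [hEq]; ring
              exact hzz ▸ hh'
          have hcard2 : (Finset.univ \ ({μ (G.tail e), μ (G.head e) - γ e} :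
              Finset (ZMod 3))).card = 1 := by
            rw [Finset.card_sdiff_of_subset (Finset.subset_univ _), card_univ_zmod3,
              Finset.card_insert_of_notMem (by simpa using hx), Finset.card_singleton]
          have := Finset.card_le_card hsub
          rw [hcard2] at this
          have hdef : a e = (fib S' e).card := rfl
          omega
        have htriv₂ : G.TrivialImage γ S₂ := trivialImage_of_potential hpot
        have hb₂ := (h S₂ hS2ne).1 htriv₂
        have hvcard : (G.verts S₂).card ≤ V₂.card := Finset.card_le_card hvS₂
        have hV3c : V₃.card = 0 := by simp [hV3]
        have hS3c : S₃.card = 0 := by simp [hS3e]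
        omega
      · have hV3ne : V₃.Nonempty := Finset.nonempty_of_ne_empty hV3
        have hV3card : 1 ≤ V₃.card := Finset.card_pos.mpr hV3ne
        have h2 : (S₂.card : ℤ) ≤ 2 * (V₂.card : ℤ) - 1 := by
          have hc := hcone S₂ hS2ne
          have hv : (G.verts S₂).card ≤ V₂.card := Finset.card_le_card hvS₂
          omega
        have h3 : (S₃.card : ℤ) ≤ 2 * (V₃.card : ℤ) - 1 := by
          by_cases hS3 : S₃ = ∅
          · rw [hS3]
            simp
            omega
          · have hc := hcone S₃ (Finset.nonempty_of_ne_empty hS3)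
            have hv : (G.verts S₃).card ≤ V₃.card := Finset.card_le_card hvS₃
            omega
        omega
end Multigraph
namespace Multigraph

open Finset

variable {V E : Type} [DecidableEq V] [DecidableEq E]

lemma lift_card (S : Finset E) : (lift S).card = 3 * S.card := by
  rw [lift, Finset.card_product, card_univ_zmod3]
  ring

lemma mem_lift {S : Finset E} {s : E × ZMod 3} : s ∈ lift S ↔ s.1 ∈ S := by
  simp [lift]

lemma lift_mono {S T : Finset E} (h : S ⊆ T) : lift S ⊆ lift T := by
  intro s hs
  exact mem_lift.mpr (h (mem_lift.mp hs))

lemma lift_injective {S T : Finset E} (h : lift S = lift T) : S = T := by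
  ext e
  constructor
  · intro he
    have h1 : ((e, 0) : E × ZMod 3) ∈ lift S := mem_lift.mpr he
    rw [h] at h1
    exact mem_lift.mp h1
  · intro he
    have h1 : ((e, 0) : E × ZMod 3) ∈ lift T := mem_lift.mpr he
    rw [← h] at h1
    exact mem_lift.mp h1

lemma verts_lift (G : Multigraph V E) (γ : E → ZMod 3) (S : Finset E) :
    (G.Development γ).verts (lift S) = (G.verts S) ×ˢ (Finset.univ : Finset (ZMod 3)) := by
  ext ⟨v, z⟩
  rw [mem_verts_dev]
  simp only [Finset.mem_product, Finset.mem_univ, and_true]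
  constructor
  · rintro (⟨s, hs, heq⟩ | ⟨s, hs, heq⟩)
    · injection heq with h1 h2
      rw [← h1]
      exact tail_mem_verts G (mem_lift.mp hs)
    · injection heq with h1 h2
      rw [← h1]
      exact head_mem_verts G (mem_lift.mp hs)
  · intro hv
    obtain ⟨e, he, rfl | rfl⟩ := (mem_verts_iff G).mp hv
    · exact Or.inl ⟨(e, z), mem_lift.mpr he, rfl⟩
    · refine Or.inr ⟨(e, z - γ e), mem_lift.mpr he, ?_⟩
      simp

lemma verts_lift_card (G : Multigraph V E) (γ : E → ZMod 3) (S : Finset E) :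
    ((G.Development γ).verts (lift S)).card = 3 * (G.verts S).card := by
  rw [verts_lift, Finset.card_product, card_univ_zmod3]
  ring

lemma coneLamanSparse_of_dev_sparse [Fintype E] (G : Multigraph V E) (γ : E → ZMod 3)
    (h : (G.Development γ).Sparse 2 3 Finset.univ) : G.ConeLamanSparse γ := by
  intro S hSne
  constructor
  · intro htriv
    obtain ⟨φ, hφ⟩ := exists_potential htriv
    set S₀ : Finset (E × ZMod 3) := S.image (fun e => (e, φ (G.tail e))) with hS₀
    have hS₀card : S₀.card = S.card :=
      Finset.card_image_of_injective _ (fun e₁ e₂ he => congrArg Prod.fst he)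
    have hS₀ne : S₀.Nonempty := hSne.image _
    have hvsub : (G.Development γ).verts S₀ ⊆ (G.verts S).image (fun v => (v, φ v)) := by
      intro p hp
      rcases (mem_verts_dev G γ).mp hp with ⟨s, hs, heq⟩ | ⟨s, hs, heq⟩
      · obtain ⟨e, he, rfl⟩ := Finset.mem_image.mp hs
        rw [← heq]
        exact Finset.mem_image_of_mem _ (tail_mem_verts G he)
      · obtain ⟨e, he, rfl⟩ := Finset.mem_image.mp hs
        rw [← heq]
        have : ((G.head e, φ (G.tail e) + γ e) : V × ZMod 3) = (G.head e, φ (G.head e)) := by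
          rw [hφ e he]
        rw [this]
        exact Finset.mem_image_of_mem _ (head_mem_verts G he)
    have hvcard : ((G.Development γ).verts S₀).card ≤ (G.verts S).card :=
      le_trans (Finset.card_le_card hvsub) (Finset.card_image_le)
    have := h S₀ (Finset.subset_univ _) hS₀ne
    rw [hS₀card] at this
    have hc : (((G.Development γ).verts S₀).card : ℤ) ≤ ((G.verts S).card : ℤ) := by
      exact_mod_cast hvcard
    linarith
  · intro _
    have := h (lift S) (Finset.subset_univ _) (by
      obtain ⟨e, he⟩ := hSne
      exact ⟨(e, 0), mem_lift.mpr he⟩)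
    rw [lift_card, verts_lift_card] at this
    push_cast at this
    linarith

-- union of tight sets with common part
lemma sparse_subset {W F : Type} [DecidableEq W] [DecidableEq F] {H : Multigraph W F}
    {k l : ℤ} {A : Finset F} [Fintype F] (hs : H.Sparse k l Finset.univ) : H.Sparse k l A :=
  fun S' _ hne => hs S' (Finset.subset_univ _) hne

lemma verts_union {W F : Type} [DecidableEq W] (H : Multigraph W F) (A B : Finset F)
    [DecidableEq F] : H.verts (A ∪ B) = H.verts A ∪ H.verts B := by
  simp only [verts, Finset.image_union]
  ext v
  simp only [Finset.mem_union]
  tauto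

lemma tight_union {W F : Type} [DecidableEq W] [DecidableEq F] [Fintype F]
    {H : Multigraph W F} (hs : H.Sparse 2 3 Finset.univ) {A B : Finset F}
    (hA : H.Tight 2 3 A) (hB : H.Tight 2 3 B) (hAB : (A ∩ B).Nonempty) :
    H.Tight 2 3 (A ∪ B) := by
  refine ⟨sparse_subset hs, ?_⟩
  have hABle : ((A ∩ B).card : ℤ) ≤ 2 * ((H.verts (A ∩ B)).card : ℤ) - 3 :=
    hs (A ∩ B) (Finset.subset_univ _) hAB
  have hcardU : (A ∪ B).card + (A ∩ B).card = A.card + B.card :=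
    Finset.card_union_add_card_inter A B
  have hvU : H.verts (A ∪ B) = H.verts A ∪ H.verts B := verts_union H A B
  have hvI : H.verts (A ∩ B) ⊆ H.verts A ∩ H.verts B := by
    intro v hv
    exact Finset.mem_inter.mpr ⟨verts_mono H Finset.inter_subset_left hv,
      verts_mono H Finset.inter_subset_right hv⟩
  have hvIcard : (H.verts (A ∩ B)).card ≤ (H.verts A ∩ H.verts B).card :=
    Finset.card_le_card hvI
  have hvcardU : (H.verts A ∪ H.verts B).card + (H.verts A ∩ H.verts B).card =
      (H.verts A).card + (H.verts B).card :=
    Finset.card_union_add_card_inter _ _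
  have hle : ((A ∪ B).card : ℤ) ≤ 2 * ((H.verts (A ∪ B)).card : ℤ) - 3 := by
    rcases (A ∪ B).eq_empty_or_nonempty with hAe | hne
    · have : A = ∅ := Finset.union_eq_empty.mp hAe |>.1
      subst this
      obtain ⟨x, hx⟩ := hAB
      simp at hx
    · exact hs (A ∪ B) (Finset.subset_univ _) hne
  have hge : 2 * ((H.verts (A ∪ B)).card : ℤ) - 3 ≤ ((A ∪ B).card : ℤ) := by
    have e1 := hA.2
    have e2 := hB.2
    rw [hvU]
    omega
  omega

end Multigraph
namespace Multigraph

open Finset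

variable {V E : Type} [DecidableEq V] [DecidableEq E]

lemma devShiftE_injective (z : ZMod 3) : Function.Injective (devShiftE (E := E) z) := by
  rintro ⟨e, w⟩ ⟨e', w'⟩ h
  simp only [devShiftE, Prod.mk.injEq] at h
  obtain ⟨rfl, h2⟩ := h
  have : w = w' := by
    have := congrArg (fun x => x - z) h2
    simpa using this
  rw [this]

lemma devShift_injective (z : ZMod 3) : Function.Injective (devShift (V := V) z) := by
  rintro ⟨v, w⟩ ⟨v', w'⟩ h
  simp only [devShift, Prod.mk.injEq] at h
  obtain ⟨rfl, h2⟩ := h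
  have : w = w' := by
    have := congrArg (fun x => x - z) h2
    simpa using this
  rw [this]

lemma verts_shift (G : Multigraph V E) (γ : E → ZMod 3) (A : Finset (E × ZMod 3))
    (z : ZMod 3) :
    (G.Development γ).verts (A.image (devShiftE z)) =
      ((G.Development γ).verts A).image (devShift z) := by
  simp only [verts, Finset.image_union, Finset.image_image]
  have h1 : ((G.Development γ).tail ∘ devShiftE z) = devShift z ∘ (G.Development γ).tail := by
    funext s
    rfl
  have h2 : ((G.Development γ).head ∘ devShiftE z) = devShift z ∘ (G.Development γ).head := by
    funext s
    show ((G.head s.1, s.2 + z + γ s.1) : V × ZMod 3) = (G.head s.1, s.2 + γ s.1 + z)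
    rw [add_right_comm]
  rw [h1, h2]

lemma tight_shift {G : Multigraph V E} {γ : E → ZMod 3} [Fintype E]
    (hs : (G.Development γ).Sparse 2 3 Finset.univ) {A : Finset (E × ZMod 3)} (z : ZMod 3)
    (hA : (G.Development γ).Tight 2 3 A) :
    (G.Development γ).Tight 2 3 (A.image (devShiftE z)) := by
  refine ⟨sparse_subset hs, ?_⟩
  rw [Finset.card_image_of_injective _ (devShiftE_injective z), verts_shift,
    Finset.card_image_of_injective _ (devShift_injective z)]
  exact hA.2

lemma shiftE_one_two (s : E × ZMod 3) : devShiftE 1 (devShiftE 2 s) = s := by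
  cases s with
  | mk e w =>
    show ((e, w + 2 + 1) : E × ZMod 3) = (e, w)
    have h3 : (2 + 1 : ZMod 3) = 0 := by decide
    rw [add_assoc, h3, add_zero]

lemma lift_sym (S : Finset E) : (lift S).image (devShiftE 1) = lift S := by
  ext ⟨e, z⟩
  simp only [Finset.mem_image, mem_lift]
  constructor
  · rintro ⟨⟨e', w⟩, hw, heq⟩
    injection heq with h1 h2
    rw [← h1]
    exact hw
  · intro he
    refine ⟨(e, z - 1), he, ?_⟩
    show ((e, z - 1 + 1) : E × ZMod 3) = (e, z)
    rw [sub_add_cancel]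

lemma sym_eq_lift {A : Finset (E × ZMod 3)} (hA : A.image (devShiftE 1) = A) :
    A = lift (A.image Prod.fst) := by
  have hstep : ∀ s ∈ A, devShiftE 1 s ∈ A := by
    intro s hs
    rw [← hA]
    exact Finset.mem_image_of_mem _ hs
  ext ⟨e, z⟩
  simp only [mem_lift]
  constructor
  · intro hz
    exact Finset.mem_image_of_mem _ hz
  · intro he
    obtain ⟨⟨e', w⟩, hw, heq⟩ := Finset.mem_image.mp he
    simp only at heq
    subst heq
    have h1 : ((e', w + 1) : E × ZMod 3) ∈ A := hstep _ hw
    have h2 : ((e', w + 1 + 1) : E × ZMod 3) ∈ A := hstep _ h1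
    have hall : ∀ d : ZMod 3, d = 0 ∨ d = 1 ∨ d = 2 := by decide
    have hd : z - w = 0 ∨ z - w = 1 ∨ z - w = 2 := hall _
    have hz : z = w + (z - w) := by ring
    rcases hd with hd | hd | hd
    · rw [hz, hd, add_zero]; exact hw
    · rw [hz, hd]; exact h1
    · rw [hz, hd]
      have : w + 2 = w + 1 + 1 := by ring
      rw [this]
      exact h2

end Multigraph

namespace Multigraph

open Finset

variable {V E : Type} [DecidableEq V] [DecidableEq E]

lemma lift_sym_any (S : Finset E) (z : ZMod 3) : (lift S).image (devShiftE z) = lift S := by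
  ext ⟨e, w⟩
  simp only [Finset.mem_image, mem_lift]
  constructor
  · rintro ⟨⟨e', w'⟩, hw, heq⟩
    injection heq with h1 h2
    rw [← h1]
    exact hw
  · intro he
    refine ⟨(e, w - z), he, ?_⟩
    show ((e, w - z + z) : E × ZMod 3) = (e, w)
    rw [sub_add_cancel]

lemma shiftE_one_one (s : E × ZMod 3) : devShiftE 1 (devShiftE 1 s) = devShiftE 2 s := by
  cases s with
  | mk e w =>
    show ((e, w + 1 + 1) : E × ZMod 3) = (e, w + 2)
    have h3 : (1 + 1 : ZMod 3) = 2 := by decide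
    rw [add_assoc, h3]

end Multigraph


open Multigraph in
/-- `(G, γ)` is cone-Laman iff its development is a Laman graph; moreover,
for cone-Laman-sparse `(G, γ)`, the rigid components of `(G, γ)` correspond to the
symmetric `(2,3)`-components of the development. -/
theorem cone_laman_iff_development_laman
    {V E : Type} [Fintype V] [Fintype E] [DecidableEq V] [DecidableEq E]
    (G : Multigraph V E) (γ : E → ZMod 3) :
    (G.ConeLamanGraph γ ↔
      ((G.Development γ).Sparse 2 3 Finset.univ ∧
        (Fintype.card (E × ZMod 3) : ℤ) = 2 * (Fintype.card (V × ZMod 3) : ℤ) - 3)) ∧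
    (G.ConeLamanSparse γ →
      ∀ S : Finset E,
        (((S.card : ℤ) = 2 * ((G.verts S).card : ℤ) - 1 ∧
            ∀ S' : Finset E, S ⊆ S' →
              (S'.card : ℤ) = 2 * ((G.verts S').card : ℤ) - 1 → S' = S) ↔
          ((G.Development γ).Tight 2 3 (lift S) ∧
            (∀ T' : Finset (E × ZMod 3), lift S ⊆ T' →
              (G.Development γ).Tight 2 3 T' → T' = lift S) ∧
            (lift S).image (devShiftE 1) = lift S))) := by
  have hcardE : (Fintype.card (E × ZMod 3) : ℤ) = 3 * (Fintype.card E : ℤ) := by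
    rw [Fintype.card_prod, ZMod.card 3]
    push_cast
    ring
  have hcardV : (Fintype.card (V × ZMod 3) : ℤ) = 3 * (Fintype.card V : ℤ) := by
    rw [Fintype.card_prod, ZMod.card 3]
    push_cast
    ring
  constructor
  · constructor
    · rintro ⟨hsp, hcard⟩
      refine ⟨dev_sparse_of_coneLamanSparse G γ hsp, ?_⟩
      rw [hcardE, hcardV]
      linarith
    · rintro ⟨hsp, hcard⟩
      refine ⟨coneLamanSparse_of_dev_sparse G γ hsp, ?_⟩
      rw [hcardE, hcardV] at hcard
      linarith
  · intro hsp S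
    have hdev := dev_sparse_of_coneLamanSparse G γ hsp
    constructor
    · rintro ⟨hcard, hmax⟩
      have hSne : S.Nonempty := by
        rcases S.eq_empty_or_nonempty with rfl | h
        · exfalso
          simp [verts] at hcard
        · exact h
      obtain ⟨e₀, he₀⟩ := hSne
      have hliftS_ne : (lift S).Nonempty := ⟨(e₀, 0), mem_lift.mpr he₀⟩
      refine ⟨⟨sparse_subset hdev, ?_⟩, ?_, lift_sym S⟩
      · rw [lift_card, verts_lift_card]
        push_cast
        linarith
      · intro T' hsub hT'
        set A1 := T'.image (devShiftE 1) with hA1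
        set A2 := T'.image (devShiftE 2) with hA2
        have hsubs1 : lift S ⊆ A1 := by
          calc lift S = (lift S).image (devShiftE 1) := (lift_sym_any S 1).symm
            _ ⊆ A1 := Finset.image_subset_image hsub
        have hsubs2 : lift S ⊆ A2 := by
          calc lift S = (lift S).image (devShiftE 2) := (lift_sym_any S 2).symm
            _ ⊆ A2 := Finset.image_subset_image hsub
        have hU1 : (G.Development γ).Tight 2 3 (T' ∪ A1) :=
          tight_union hdev hT' (tight_shift hdev 1 hT')
            (hliftS_ne.mono (Finset.subset_inter hsub hsubs1))
        have hU : (G.Development γ).Tight 2 3 ((T' ∪ A1) ∪ A2) :=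
          tight_union hdev hU1 (tight_shift hdev 2 hT')
            (hliftS_ne.mono (Finset.subset_inter
              (hsub.trans Finset.subset_union_left) hsubs2))
        have hc11 : A1.image (devShiftE 1) = A2 := by
          rw [hA1, Finset.image_image, hA2]
          apply Finset.image_congr
          intro s _
          exact shiftE_one_one s
        have hc12 : A2.image (devShiftE 1) = T' := by
          rw [hA2, Finset.image_image]
          have : (devShiftE 1 ∘ devShiftE 2 : E × ZMod 3 → E × ZMod 3) = id := by
            funext s
            exact shiftE_one_two s
          rw [this, Finset.image_id]
        have hUsym : ((T' ∪ A1) ∪ A2).image (devShiftE 1) = (T' ∪ A1) ∪ A2 := by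
          rw [Finset.image_union, Finset.image_union, hc11, hc12, ← hA1]
          ext s
          simp only [Finset.mem_union]
          tauto
        have hUlift := sym_eq_lift hUsym
        set P := ((T' ∪ A1) ∪ A2).image Prod.fst with hP
        have hSP : S ⊆ P := by
          intro e he
          have h0 : ((e, 0) : E × ZMod 3) ∈ (T' ∪ A1) ∪ A2 :=
            Finset.mem_union.mpr (Or.inl (Finset.mem_union.mpr (Or.inl
              (hsub (mem_lift.mpr he)))))
          exact Finset.mem_image_of_mem _ h0
        have hPcard : (P.card : ℤ) = 2 * ((G.verts P).card : ℤ) - 1 := by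
          have h2 := hU.2
          rw [hUlift, lift_card, verts_lift_card] at h2
          push_cast at h2
          linarith
        have hPS : P = S := hmax P hSP hPcard
        have hTsub : T' ⊆ lift S := by
          intro s hs
          have : s ∈ (T' ∪ A1) ∪ A2 :=
            Finset.mem_union.mpr (Or.inl (Finset.mem_union.mpr (Or.inl hs)))
          rw [hUlift, hPS] at this
          exact this
        exact Finset.Subset.antisymm hTsub hsub
    · rintro ⟨hT, hmaxT, hsym⟩
      have hc := hT.2
      rw [lift_card, verts_lift_card] at hc
      push_cast at hc
      constructor
      · linarith
      · intro S' hSS' hcard'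
        have hT' : (G.Development γ).Tight 2 3 (lift S') := by
          refine ⟨sparse_subset hdev, ?_⟩
          rw [lift_card, verts_lift_card]
          push_cast
          linarith
        exact lift_injective (hmaxT (lift S') (lift_mono hSS') hT')
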